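/- arXiv:2502.08237 — 2 statements merged into one kernel-verified Lean document; each statement's English description precedes it below -/
import Mathlib

section
/- For all real numbers a, b ≥ 1 and all real k > 2, one has (a² + b²)^{k/2} ≤ a^k + b^k + 2^{k/2+1} ( a² b^{k-2} · 1_{a ≤ b} + a^{k-2} b² · 1_{b ≤ a} ). -/
open Real

private lemma key_povzner (a b k : ℝ) (ha : 1 ≤ a) (hb : 1 ≤ b) (hk : 2 < k)
    (hab : a ≤ b) :
    (a ^ 2 + b ^ 2) ^ (k / 2) ≤ a ^ k + b ^ k + 2 ^ (k / 2 + 1) * (a ^ 2 * b ^ (k - 2)) := by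
  have ha0 : (0:ℝ) < a := lt_of_lt_of_le one_pos ha
  have hb0 : (0:ℝ) < b := lt_of_lt_of_le one_pos hb
  have hb2 : (0:ℝ) < b ^ 2 := by positivity
  set p : ℝ := k / 2 with hp
  have hp1 : (1:ℝ) ≤ p := by rw [hp]; linarith
  set r : ℝ := a ^ 2 / b ^ 2 with hr
  have hr0 : 0 < r := by positivity
  have hr1 : r ≤ 1 := by
    rw [hr, div_le_one hb2]
    exact pow_le_pow_left₀ (le_of_lt ha0) hab 2
  -- convexity: (1+r)^p ≤ (1-r)*1^p + r*2^p
  have hconv := (convexOn_rpow hp1).2 (Set.mem_Ici.2 (by norm_num : (0:ℝ) ≤ 1))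
    (Set.mem_Ici.2 (by norm_num : (0:ℝ) ≤ 2)) (by linarith : (0:ℝ) ≤ 1 - r)
    (le_of_lt hr0) (by ring)
  simp only [smul_eq_mul] at hconv
  have h1 : (1 - r) * (1:ℝ) + r * 2 = 1 + r := by ring
  rw [h1] at hconv
  have hone : (1:ℝ) ^ p = 1 := Real.one_rpow p
  rw [hone] at hconv
  -- rewrite LHS
  have hsum : a ^ 2 + b ^ 2 = b ^ 2 * (1 + r) := by
    rw [hr, mul_add, mul_one, mul_div_assoc', mul_comm (b ^ 2) (a ^ 2), mul_div_assoc, div_self (ne_of_gt hb2), mul_one]; ring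
  have hLHS : (a ^ 2 + b ^ 2) ^ p = (b ^ 2) ^ p * (1 + r) ^ p := by
    rw [hsum, Real.mul_rpow (le_of_lt hb2) (by linarith)]
  have hb2p : (b ^ 2) ^ p = b ^ k := by
    rw [← Real.rpow_natCast b 2, ← Real.rpow_mul (le_of_lt hb0)]
    norm_num [hp]
    ring_nf
  have hrb : r * b ^ k = a ^ 2 * b ^ (k - 2) := by
    rw [hr]
    rw [show b ^ k = b ^ 2 * b ^ (k - 2) by
      rw [← Real.rpow_natCast b 2, ← Real.rpow_add hb0]; norm_num]
    field_simp
  have hstep : (a ^ 2 + b ^ 2) ^ p ≤ b ^ k * (1 + r * (2 ^ p - 1)) := by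
    rw [hLHS, hb2p]
    have := mul_le_mul_of_nonneg_left hconv (le_of_lt (Real.rpow_pos_of_pos hb0 k))
    calc b ^ k * (1 + r) ^ p ≤ b ^ k * ((1 - r) * 1 + r * 2 ^ p) := this
      _ = b ^ k * (1 + r * (2 ^ p - 1)) := by ring
  have h2p : (2:ℝ) ^ p - 1 ≤ 2 ^ (p + 1) := by
    have : (2:ℝ) ^ p ≤ 2 ^ (p + 1) :=
      Real.rpow_le_rpow_of_exponent_le (by norm_num) (by linarith)
    linarith
  have hak : 0 < a ^ k := Real.rpow_pos_of_pos ha0 k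
  calc (a ^ 2 + b ^ 2) ^ p ≤ b ^ k * (1 + r * (2 ^ p - 1)) := hstep
    _ = b ^ k + (r * b ^ k) * (2 ^ p - 1) := by ring
    _ = b ^ k + (a ^ 2 * b ^ (k - 2)) * (2 ^ p - 1) := by rw [hrb]
    _ ≤ a ^ k + b ^ k + 2 ^ (p + 1) * (a ^ 2 * b ^ (k - 2)) := by
        have hpos : 0 ≤ a ^ 2 * b ^ (k - 2) := by
          have := Real.rpow_pos_of_pos hb0 (k - 2); positivity
        nlinarith [mul_le_mul_of_nonneg_left h2p hpos]

theorem p_binomial_inequality (a b k : ℝ) (ha : 1 ≤ a) (hb : 1 ≤ b) (hk : 2 < k) :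
    (a ^ 2 + b ^ 2) ^ (k / 2) ≤
      a ^ k + b ^ k +
        2 ^ (k / 2 + 1) *
          (a ^ 2 * b ^ (k - 2) * (if a ≤ b then (1 : ℝ) else 0) +
            a ^ (k - 2) * b ^ 2 * (if b ≤ a then (1 : ℝ) else 0)) := by
  have ha0 : (0:ℝ) < a := lt_of_lt_of_le one_pos ha
  have hb0 : (0:ℝ) < b := lt_of_lt_of_le one_pos hb
  have h2pos : (0:ℝ) < 2 ^ (k / 2 + 1) := Real.rpow_pos_of_pos (by norm_num) _
  have hterm1 : 0 ≤ a ^ 2 * b ^ (k - 2) := by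
    have := Real.rpow_pos_of_pos hb0 (k - 2); positivity
  have hterm2 : 0 ≤ a ^ (k - 2) * b ^ 2 := by
    have := Real.rpow_pos_of_pos ha0 (k - 2); positivity
  rcases le_total a b with hab | hba
  · rw [if_pos hab]
    have := key_povzner a b k ha hb hk hab
    by_cases hba : b ≤ a
    · rw [if_pos hba]
      nlinarith
    · rw [if_neg hba]
      nlinarith
  · rw [if_pos hba]
    have := key_povzner b a k hb ha hk hba
    rw [show b ^ 2 + a ^ 2 = a ^ 2 + b ^ 2 by ring] at this
    by_cases hab : a ≤ b
    · rw [if_pos hab]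
      nlinarith
    · rw [if_neg hab]
      nlinarith
end

section
/- Let 0 < ω ≤ 1, and suppose W₁ ≤ −Ā m_{k+ζ} + B̄ and W₂ ≤ D m₂ m_k with Ā, m₂ > 0, B̄, D, m_k, m_{k+ζ} ≥ 0, and suppose the interpolation m_k ≤ m₂^{ζ/(k-2+ζ)} m_{k+ζ}^{(k-2)/(k-2+ζ)} holds, ζ ∈ (0,2], k > 2. Then ω W₁ + (1−ω) W₂ ≤ −(ω Ā / 2) m₂^{−ζ/(k-2)} m_k^{1+ζ/(k-2)} + ω B̄ + ((1−ω) D)^{(k-2+ζ)/ζ} m₂^{(k-2+ζ)/ζ + 1} (ω Ā / 2)^{−(k-2)/ζ}. -/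
theorem omega_convex_absorption
    (ω W₁ W₂ Abar B D m₂ mk mkζ k ζ : ℝ)
    (hω0 : 0 < ω) (hω1 : ω ≤ 1)
    (hA : 0 < Abar) (hm2 : 0 < m₂) (hB : 0 ≤ B) (hD : 0 ≤ D)
    (hmk : 0 ≤ mk) (hmkζ : 0 ≤ mkζ)
    (hW1 : W₁ ≤ -Abar * mkζ + B) (hW2 : W₂ ≤ D * m₂ * mk)
    (hζ0 : 0 < ζ) (hζ2 : ζ ≤ 2) (hk : 2 < k)
    (hinterp : mk ≤ m₂ ^ (ζ / (k - 2 + ζ)) * mkζ ^ ((k - 2) / (k - 2 + ζ))) :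
    ω * W₁ + (1 - ω) * W₂
      ≤ -(ω * Abar / 2) * m₂ ^ (-ζ / (k - 2)) * mk ^ (1 + ζ / (k - 2)) + ω * B
        + ((1 - ω) * D) ^ ((k - 2 + ζ) / ζ) * m₂ ^ ((k - 2 + ζ) / ζ + 1)
          * (ω * Abar / 2) ^ (-(k - 2) / ζ) := by
  have hs : (0:ℝ) < k - 2 := by linarith
  have hsζ : (0:ℝ) < k - 2 + ζ := by linarith
  set s : ℝ := k - 2 with hs_def
  set p : ℝ := (s + ζ) / ζ with hp_def
  set q : ℝ := (s + ζ) / s with hq_def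
  have hp1 : 1 < p := by
    rw [hp_def, lt_div_iff₀ hζ0]; linarith
  have hq1 : 1 < q := by
    rw [hq_def, lt_div_iff₀ hs]; linarith
  have hp0 : 0 < p := by linarith
  have hq0 : 0 < q := by linarith
  have hconj : p.HolderConjugate q := by
    refine Real.holderConjugate_iff.mpr ⟨hp1, ?_⟩
    rw [hp_def, hq_def]
    field_simp
    ring
  set δ : ℝ := ω * Abar / 2 with hδ_def
  have hδ0 : 0 < δ := by positivity
  set X : ℝ := m₂ ^ (-ζ / s) * mk ^ (1 + ζ / s) with hX_def
  have hq_eq : 1 + ζ / s = q := by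
    rw [hq_def]; field_simp
  -- Step 1 : X ≤ mkζ
  have hXnn : 0 ≤ X := by positivity
  have hstep1 : X ≤ mkζ := by
    have h1 : mk ^ q ≤ (m₂ ^ (ζ / (s + ζ)) * mkζ ^ (s / (s + ζ))) ^ q := by
      apply Real.rpow_le_rpow hmk _ (le_of_lt hq0)
      convert hinterp using 3 <;> rw [hs_def]
    have h2 : (m₂ ^ (ζ / (s + ζ)) * mkζ ^ (s / (s + ζ))) ^ q
        = m₂ ^ (ζ / s) * mkζ := by
      rw [Real.mul_rpow (by positivity) (by positivity),
        ← Real.rpow_mul hm2.le, ← Real.rpow_mul hmkζ]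
      have e1 : ζ / (s + ζ) * q = ζ / s := by
        rw [hq_def]; field_simp
      have e2 : s / (s + ζ) * q = 1 := by
        rw [hq_def]; field_simp
      rw [e1, e2, Real.rpow_one]
    rw [h2] at h1
    calc X = m₂ ^ (-ζ / s) * mk ^ q := by rw [hX_def, hq_eq]
      _ ≤ m₂ ^ (-ζ / s) * (m₂ ^ (ζ / s) * mkζ) := by
          apply mul_le_mul_of_nonneg_left h1 (by positivity)
      _ = m₂ ^ (-ζ / s + ζ / s) * mkζ := by
          rw [Real.rpow_add hm2]; ring
      _ = mkζ := by
          rw [show -ζ / s + ζ / s = 0 by ring, Real.rpow_zero, one_mul]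
  -- Step 2 : Young
  set u : ℝ := (1 - ω) * D * δ ^ (-(1 / q)) * m₂ ^ (1 + 1 / p) with hu_def
  set v : ℝ := δ ^ (1 / q) * m₂ ^ (-(1 / p)) * mk with hv_def
  have hω2 : 0 ≤ 1 - ω := by linarith
  have hu0 : 0 ≤ u := by positivity
  have hv0 : 0 ≤ v := by positivity
  have huv : u * v = (1 - ω) * D * m₂ * mk := by
    rw [hu_def, hv_def]
    have e1 : δ ^ (-(1 / q)) * δ ^ (1 / q) = 1 := by
      rw [← Real.rpow_add hδ0]; norm_num
    have e2 : m₂ ^ (1 + 1 / p) * m₂ ^ (-(1 / p)) = m₂ := by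
      rw [← Real.rpow_add hm2]; norm_num
    calc (1 - ω) * D * δ ^ (-(1 / q)) * m₂ ^ (1 + 1 / p) *
          (δ ^ (1 / q) * m₂ ^ (-(1 / p)) * mk)
        = (1 - ω) * D * (δ ^ (-(1 / q)) * δ ^ (1 / q)) *
          (m₂ ^ (1 + 1 / p) * m₂ ^ (-(1 / p))) * mk := by ring
      _ = (1 - ω) * D * m₂ * mk := by rw [e1, e2]; ring
  have hyoung : u * v ≤ u ^ p + v ^ q := by
    calc u * v ≤ u ^ p / p + v ^ q / q :=
        Real.young_inequality_of_nonneg hu0 hv0 hconj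
      _ ≤ u ^ p + v ^ q := by
          have h1 : u ^ p / p ≤ u ^ p := by
            apply div_le_self (by positivity) (le_of_lt hp1)
          have h2 : v ^ q / q ≤ v ^ q := by
            apply div_le_self (by positivity) (le_of_lt hq1)
          linarith
  have hup : u ^ p = ((1 - ω) * D) ^ p * m₂ ^ (p + 1) * δ ^ (-(s / ζ)) := by
    rw [hu_def, Real.mul_rpow (by positivity) (by positivity),
      Real.mul_rpow (by positivity) (by positivity),
      ← Real.rpow_mul hδ0.le, ← Real.rpow_mul hm2.le]
    have e1 : -(1 / q) * p = -(s / ζ) := by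
      rw [hq_def, hp_def]; field_simp
    have e2 : (1 + 1 / p) * p = p + 1 := by
      field_simp
    rw [e1, e2]; ring
  have hvq : v ^ q = δ * X := by
    rw [hv_def, Real.mul_rpow (by positivity) hmk,
      Real.mul_rpow (by positivity) (by positivity),
      ← Real.rpow_mul hδ0.le, ← Real.rpow_mul hm2.le]
    have e1 : 1 / q * q = 1 := by field_simp
    have e2 : -(1 / p) * q = -ζ / s := by
      rw [hq_def, hp_def]; field_simp
    rw [e1, e2, Real.rpow_one, hX_def, hq_eq]
    ring
  have hC : (1 - ω) * D * m₂ * mk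
      ≤ ((1 - ω) * D) ^ p * m₂ ^ (p + 1) * δ ^ (-(s / ζ)) + δ * X := by
    rw [← huv, ← hup, ← hvq]; exact hyoung
  -- combine
  have hmain : ω * W₁ + (1 - ω) * W₂
      ≤ ω * (-Abar * mkζ + B) + (1 - ω) * (D * m₂ * mk) := by
    gcongr
  have habs : -(ω * Abar) * mkζ ≤ -(ω * Abar) * X := by
    have : 0 ≤ ω * Abar := by positivity
    nlinarith
  have hfinal : ω * W₁ + (1 - ω) * W₂
      ≤ -δ * X + ω * B
        + ((1 - ω) * D) ^ p * m₂ ^ (p + 1) * δ ^ (-(s / ζ)) := by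
    have h1 : (1 - ω) * (D * m₂ * mk)
        ≤ ((1 - ω) * D) ^ p * m₂ ^ (p + 1) * δ ^ (-(s / ζ)) + δ * X := by
      calc (1 - ω) * (D * m₂ * mk) = (1 - ω) * D * m₂ * mk := by ring
        _ ≤ _ := hC
    have h2 : ω * (-Abar * mkζ + B) = -(ω * Abar) * mkζ + ω * B := by ring
    have h3 : -(ω * Abar) * X = -(2 * δ) * X := by rw [hδ_def]; ring
    calc ω * W₁ + (1 - ω) * W₂
        ≤ ω * (-Abar * mkζ + B) + (1 - ω) * (D * m₂ * mk) := hmain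
      _ ≤ (-(ω * Abar) * X + ω * B) +
          (((1 - ω) * D) ^ p * m₂ ^ (p + 1) * δ ^ (-(s / ζ)) + δ * X) := by
          rw [h2]; linarith [habs, h1]
      _ = -δ * X + ω * B
          + ((1 - ω) * D) ^ p * m₂ ^ (p + 1) * δ ^ (-(s / ζ)) := by
          rw [h3]; ring
  have erw1 : -(s / ζ) = -s / ζ := by ring
  have erw2 : p = (s + ζ) / ζ := hp_def
  calc ω * W₁ + (1 - ω) * W₂ ≤ _ := hfinal
    _ = -(ω * Abar / 2) * m₂ ^ (-ζ / (k - 2)) * mk ^ (1 + ζ / (k - 2)) + ω * B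
        + ((1 - ω) * D) ^ ((k - 2 + ζ) / ζ) * m₂ ^ ((k - 2 + ζ) / ζ + 1)
          * (ω * Abar / 2) ^ (-(k - 2) / ζ) := by
        rw [hX_def, hδ_def, hp_def, erw1, hs_def]
        ring
end
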